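/- Let A be a finite-dimensional strongly positively multiplicative ℝ-algebra with basis B = {b_0 = 1, ..., b_{n-1}}. Then there exists a unique algebra morphism f: A → ℝ that is nonnegative on every basis element b_i, and f(b_0) = 1; moreover f(b_i) equals the i-th coordinate of the left Perron-Frobenius eigenvector (normalized so its first coordinate is 1) of the positive matrix S = Σ_i L_i where L_i is the left-multiplication matrix of b_i. -/

import Mathlib

open Finset

section aux

lemma spm_contOn_inf' {ι X : Type*} [TopologicalSpace X] {K : Set X}
    (s : Finset ι) (hs : s.Nonempty) (f : ι → X → ℝ)
    (hf : ∀ i, ContinuousOn (f i) K) :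
    ContinuousOn (fun x => s.inf' hs fun i => f i x) K := by
  induction hs using Finset.Nonempty.cons_induction with
  | singleton i => simp only [Finset.inf'_singleton]; exact hf i
  | cons i s hi hne ih =>
      have h : (fun x => (Finset.cons i s hi).inf' (Finset.cons_nonempty hi) fun j => f j x)
          = fun x => min (f i x) (s.inf' hne fun j => f j x) := by
        funext x
        rw [Finset.inf'_cons]
      rw [h]
      exact fun x hx => (hf i x hx).min (ih x hx)

lemma spm_eig_le {n : ℕ} [NeZero n] {S : Fin n → Fin n → ℝ} (hS : ∀ k j, 0 < S k j)
    {v w : Fin n → ℝ} {μ lam : ℝ} (hv : ∀ i, 0 < v i) (hw : ∀ i, 0 < w i)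
    (hev : ∀ j, ∑ k, v k * S k j = μ * v j)
    (hew : ∀ j, ∑ k, w k * S k j = lam * w j) : μ ≤ lam := by
  obtain ⟨j0, -, hj0⟩ := Finset.exists_min_image Finset.univ (fun j => w j / v j)
    ⟨0, Finset.mem_univ 0⟩
  set t := w j0 / v j0 with ht_def
  have ht : 0 < t := div_pos (hw j0) (hv j0)
  have htv : ∀ k, t * v k ≤ w k := by
    intro k
    have h := hj0 k (Finset.mem_univ k)
    calc t * v k ≤ (w k / v k) * v k := by
          exact mul_le_mul_of_nonneg_right h (hv k).le
      _ = w k := div_mul_cancel₀ _ (hv k).ne'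
  have hwj0 : w j0 = t * v j0 := (div_mul_cancel₀ _ (hv j0).ne').symm
  have key : t * (μ * v j0) ≤ lam * w j0 := by
    calc t * (μ * v j0) = t * ∑ k, v k * S k j0 := by rw [hev j0]
      _ = ∑ k, (t * v k) * S k j0 := by rw [Finset.mul_sum]; ring_nf
      _ ≤ ∑ k, w k * S k j0 :=
          Finset.sum_le_sum fun k _ => mul_le_mul_of_nonneg_right (htv k) (hS k j0).le
      _ = lam * w j0 := hew j0
  rw [hwj0] at key
  have hpos : 0 < t * v j0 := mul_pos ht (hv j0)
  nlinarith

lemma spm_eig_unique {n : ℕ} [NeZero n] {S : Fin n → Fin n → ℝ} (hS : ∀ k j, 0 < S k j)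
    {v w : Fin n → ℝ} {μ lam : ℝ} (hv : ∀ i, 0 < v i) (hw : ∀ i, 0 < w i)
    (hev : ∀ j, ∑ k, v k * S k j = μ * v j)
    (hew : ∀ j, ∑ k, w k * S k j = lam * w j) :
    ∃ t : ℝ, 0 < t ∧ ∀ k, w k = t * v k := by
  have hml : μ = lam := le_antisymm (spm_eig_le hS hv hw hev hew) (spm_eig_le hS hw hv hew hev)
  obtain ⟨j0, -, hj0⟩ := Finset.exists_min_image Finset.univ (fun j => w j / v j)
    ⟨0, Finset.mem_univ 0⟩
  set t := w j0 / v j0 with ht_def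
  have ht : 0 < t := div_pos (hw j0) (hv j0)
  have htv : ∀ k, t * v k ≤ w k := by
    intro k
    have h := hj0 k (Finset.mem_univ k)
    calc t * v k ≤ (w k / v k) * v k := mul_le_mul_of_nonneg_right h (hv k).le
      _ = w k := div_mul_cancel₀ _ (hv k).ne'
  have hwj0 : w j0 = t * v j0 := (div_mul_cancel₀ _ (hv j0).ne').symm
  refine ⟨t, ht, ?_⟩
  have hsum : ∑ k, (w k - t * v k) * S k j0 = 0 := by
    have : ∑ k, (w k - t * v k) * S k j0
        = (∑ k, w k * S k j0) - ∑ k, (t * v k) * S k j0 := by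
      rw [← Finset.sum_sub_distrib]; congr 1; ext k; ring
    rw [this, hew j0]
    have : ∑ k, (t * v k) * S k j0 = t * ∑ k, v k * S k j0 := by
      rw [Finset.mul_sum]; congr 1; ext k; ring
    rw [this, hev j0, hwj0, hml]; ring
  have hterm := (Finset.sum_eq_zero_iff_of_nonneg
    (fun k _ => mul_nonneg (sub_nonneg.mpr (htv k)) (hS k j0).le)).mp hsum
  intro k
  have := hterm k (Finset.mem_univ k)
  have hz : w k - t * v k = 0 := by
    rcases mul_eq_zero.mp this with h | h
    · linarith
    · exact absurd h (hS k j0).ne'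
  linarith

lemma spm_eig_pos {n : ℕ} [NeZero n] {S : Fin n → Fin n → ℝ} (hS : ∀ k j, 0 < S k j)
    {w : Fin n → ℝ} {μ : ℝ} (hw : ∀ i, 0 ≤ w i) (hw0 : 0 < w 0)
    (hew : ∀ j, ∑ k, w k * S k j = μ * w j) : 0 < μ ∧ ∀ j, 0 < w j := by
  have hsum : ∀ j, 0 < ∑ k, w k * S k j := fun j =>
    Finset.sum_pos' (fun k _ => mul_nonneg (hw k) (hS k j).le)
      ⟨0, Finset.mem_univ 0, mul_pos hw0 (hS 0 j)⟩
  have hμ : 0 < μ := by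
    have h := hew 0
    nlinarith [hsum 0]
  exact ⟨hμ, fun j => by have h := hew j; nlinarith [hsum j, hw j]⟩

lemma spm_pf_exists {n : ℕ} [NeZero n] (S : Fin n → Fin n → ℝ) (hS : ∀ k j, 0 < S k j) :
    ∃ (v : Fin n → ℝ) (μ : ℝ), (∀ i, 0 < v i) ∧ 0 < μ ∧
      ∀ j, ∑ k, v k * S k j = μ * v j := by
  classical
  have hn : 0 < n := Nat.pos_of_ne_zero (NeZero.ne n)
  have hn1 : (1 : ℝ) ≤ (n : ℝ) := by exact_mod_cast hn
  obtain ⟨p0, -, hp0⟩ := Finset.exists_min_image (Finset.univ : Finset (Fin n × Fin n))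
    (fun p => S p.1 p.2) ⟨(0, 0), Finset.mem_univ _⟩
  set σ := S p0.1 p0.2 with hσdef
  have hσ : 0 < σ := hS _ _
  have hσle : ∀ k j, σ ≤ S k j := fun k j => hp0 (k, j) (Finset.mem_univ _)
  set C := ∑ k, ∑ j, S k j with hCdef
  have hrowσ : ∀ k : Fin n, (n : ℝ) * σ ≤ ∑ j, S k j := by
    intro k
    have h : ∑ j : Fin n, σ ≤ ∑ j, S k j := Finset.sum_le_sum fun j _ => hσle k j
    simpa [Finset.sum_const, Finset.card_univ, nsmul_eq_mul] using h
  have hrowsumle : ∀ k, ∑ j, S k j ≤ C := fun k =>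
    Finset.single_le_sum (f := fun k => ∑ j, S k j)
      (fun k _ => Finset.sum_nonneg fun j _ => (hS k j).le) (Finset.mem_univ k)
  have hC : 0 < C :=
    lt_of_lt_of_le (by positivity) (le_trans (hrowσ 0) (hrowsumle 0))
  have hnσC : (n : ℝ) * σ ≤ C := le_trans (hrowσ 0) (hrowsumle 0)
  set δ := σ / C with hδdef
  have hδ : 0 < δ := div_pos hσ hC
  have hδn : δ ≤ 1 / n := by
    rw [hδdef, div_le_div_iff₀ hC (by positivity)]
    nlinarith
  set K : Set (Fin n → ℝ) := {w | (∀ j, δ ≤ w j) ∧ ∑ j, w j = 1} with hKdef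
  have hKsub : ∀ w ∈ K, ∀ j, w j ∈ Set.Icc δ 1 := by
    rintro w ⟨h1, h2⟩ j
    refine ⟨h1 j, ?_⟩
    calc w j ≤ ∑ j', w j' := Finset.single_le_sum
          (fun j' _ => le_trans hδ.le (h1 j')) (Finset.mem_univ j)
      _ = 1 := h2
  have hKclosed : IsClosed K := by
    have h1 : IsClosed {w : Fin n → ℝ | ∀ j, δ ≤ w j} := by
      have he : {w : Fin n → ℝ | ∀ j, δ ≤ w j} = ⋂ j, {w | δ ≤ w j} := by
        ext w; simp
      rw [he]
      exact isClosed_iInter fun j => isClosed_Ici.preimage (continuous_apply j)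
    have h2 : IsClosed {w : Fin n → ℝ | ∑ j, w j = 1} :=
      isClosed_eq (by continuity) continuous_const
    exact h1.inter h2
  have hKcompact : IsCompact K := by
    refine IsCompact.of_isClosed_subset
      (isCompact_univ_pi fun _ : Fin n => isCompact_Icc (a := δ) (b := 1)) hKclosed ?_
    intro w hw j _
    exact hKsub w hw j
  have hKne : K.Nonempty := by
    refine ⟨fun _ => 1 / n, fun j => hδn, ?_⟩
    rw [Finset.sum_const, Finset.card_univ, Fintype.card_fin, nsmul_eq_mul]
    field_simp
  have hwpos : ∀ w ∈ K, ∀ j, 0 < w j := fun w hw j => lt_of_lt_of_le hδ (hw.1 j)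
  set r : (Fin n → ℝ) → ℝ :=
    fun w => Finset.univ.inf' Finset.univ_nonempty
      (fun j => (∑ k, w k * S k j) / w j) with hrdef
  have hrcont : ContinuousOn r K := by
    apply spm_contOn_inf'
    intro j
    apply ContinuousOn.div
    · exact (continuous_finset_sum Finset.univ fun k _ =>
        (continuous_apply k).mul continuous_const).continuousOn
    · exact (continuous_apply j).continuousOn
    · exact fun w hw => (hwpos w hw j).ne'
  obtain ⟨w, hwK, hwmax⟩ := hKcompact.exists_isMaxOn hKne hrcont
  set μ := r w with hμdef
  have hge : ∀ j, μ * w j ≤ ∑ k, w k * S k j := by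
    intro j
    have h : μ ≤ (∑ k, w k * S k j) / w j :=
      Finset.inf'_le _ (Finset.mem_univ j)
    exact (le_div_iff₀ (hwpos w hwK j)).mp h
  have hwSpos : ∀ j, 0 < ∑ k, w k * S k j := fun j =>
    Finset.sum_pos (fun k _ => mul_pos (hwpos w hwK k) (hS k j)) Finset.univ_nonempty
  have heig : ∀ j, ∑ k, w k * S k j = μ * w j := by
    by_contra hcon
    push_neg at hcon
    obtain ⟨j1, hj1⟩ := hcon
    have hj1' : μ * w j1 < ∑ k, w k * S k j1 := lt_of_le_of_ne (hge j1) (Ne.symm hj1)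
    set N : Fin n → ℝ := fun j => ∑ k, w k * S k j with hNdef
    set c := ∑ j, N j with hcdef
    have hc : 0 < c := Finset.sum_pos (fun j _ => hwSpos j) Finset.univ_nonempty
    have hcC : c ≤ C := by
      have he : c = ∑ k, w k * ∑ j, S k j := by
        rw [hcdef, hNdef, Finset.sum_comm]
        exact Finset.sum_congr rfl fun k _ => (Finset.mul_sum _ _ _).symm
      rw [he]
      calc ∑ k, w k * ∑ j, S k j ≤ ∑ k, w k * C :=
            Finset.sum_le_sum fun k _ => mul_le_mul_of_nonneg_left (hrowsumle k)
              (hwpos w hwK k).le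
        _ = C := by rw [← Finset.sum_mul, hwK.2, one_mul]
    set y : Fin n → ℝ := fun j => N j / c with hydef
    have hyK : y ∈ K := by
      constructor
      · intro j
        have hnum : σ ≤ N j := by
          calc σ = σ * ∑ k, w k := by rw [hwK.2, mul_one]
            _ = ∑ k, σ * w k := Finset.mul_sum _ _ _
            _ ≤ ∑ k, w k * S k j := Finset.sum_le_sum fun k _ => by
                rw [mul_comm]
                exact mul_le_mul_of_nonneg_left (hσle k j) (hwpos w hwK k).le
        show δ ≤ N j / c
        rw [hδdef, div_le_div_iff₀ hC hc]
        nlinarith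
      · show ∑ j, N j / c = 1
        rw [← Finset.sum_div, ← hcdef, div_self hc.ne']
    have hkey : ∀ j, μ * N j < ∑ k, N k * S k j := by
      intro j
      have heq : μ * N j = ∑ k, (μ * w k) * S k j := by
        show μ * ∑ k, w k * S k j = _
        rw [Finset.mul_sum]
        exact Finset.sum_congr rfl fun k _ => by ring
      rw [heq]
      refine Finset.sum_lt_sum (fun k _ => mul_le_mul_of_nonneg_right (hge k) (hS k j).le)
        ⟨j1, Finset.mem_univ j1, mul_lt_mul_of_pos_right hj1' (hS j1 j)⟩
    have hry : μ < r y := by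
      rw [hrdef]
      rw [Finset.lt_inf'_iff]
      intro j _
      have hyj : 0 < y j := div_pos (hwSpos j) hc
      rw [lt_div_iff₀ hyj]
      have e1 : ∑ k, y k * S k j = (∑ k, N k * S k j) / c := by
        calc ∑ k, y k * S k j = ∑ k, N k * S k j / c :=
              Finset.sum_congr rfl fun k _ => by show N k / c * S k j = _; ring
          _ = (∑ k, N k * S k j) / c := by rw [Finset.sum_div]
      rw [e1]
      show μ * (N j / c) < _
      rw [← mul_div_assoc]
      exact div_lt_div_of_pos_right (hkey j) hc
    have h2 : r y ≤ μ := hwmax hyK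
    linarith
  refine ⟨w, μ, fun j => hwpos w hwK j, ?_, heig⟩
  have h := heig 0
  nlinarith [hwSpos 0, hwpos w hwK 0]

/-- If two eigenvectors are positive and normalized with first coordinate 1, they agree. -/
lemma spm_eig_norm_eq {n : ℕ} [NeZero n] {S : Fin n → Fin n → ℝ} (hS : ∀ k j, 0 < S k j)
    {v w : Fin n → ℝ} {μ lam : ℝ} (hv : ∀ i, 0 < v i) (hw : ∀ i, 0 < w i)
    (hv0 : v 0 = 1) (hw0 : w 0 = 1)
    (hev : ∀ j, ∑ k, v k * S k j = μ * v j)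
    (hew : ∀ j, ∑ k, w k * S k j = lam * w j) : ∀ k, w k = v k := by
  obtain ⟨t, ht, hprop⟩ := spm_eig_unique hS hv hw hev hew
  have h0 := hprop 0
  rw [hv0, hw0, mul_one] at h0
  intro k
  rw [hprop k, ← h0, one_mul]

end aux

theorem spm_unique_positive_morphism
    (n : ℕ) [NeZero n] {A : Type*} [Ring A] [Algebra ℝ A]
    (b : Module.Basis (Fin n) ℝ A) (h1 : b 0 = 1)
    (c : Fin n → Fin n → Fin n → ℝ)
    (hmul : ∀ i j, b i * b j = ∑ k, c i j k • b k)
    (hpos : ∀ i j k, 0 ≤ c i j k)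
    (hspm : ∀ j k, ∃ i, c i j k ≠ 0) :
    (∃! f : A →ₐ[ℝ] ℝ, ∀ i, 0 ≤ f (b i)) ∧
    ∀ f : A →ₐ[ℝ] ℝ, (∀ i, 0 ≤ f (b i)) →
      f (b 0) = 1 ∧
      ∀ (v : Fin n → ℝ) (μ : ℝ), (∀ i, 0 < v i) → v 0 = 1 →
        (∀ j, ∑ k, v k * (∑ i, c i j k) = μ * v j) →
        ∀ i, f (b i) = v i := by
  classical
  -- coordinates and structure constants
  have hco : ∀ (g : Fin n → ℝ) k, b.repr (∑ m, g m • b m) k = g k := by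
    intro g k
    rw [map_sum, Finsupp.finset_sum_apply]
    simp [Module.Basis.repr_self, Finsupp.single_apply]
  have hc0 : ∀ j k, c 0 j k = if j = k then 1 else 0 := by
    intro j k
    have e : (∑ m, c 0 j m • b m) = b j := by rw [← hmul, h1, one_mul]
    have h := congrArg (fun x => b.repr x k) e
    rw [hco] at h
    rw [h, Module.Basis.repr_self, Finsupp.single_apply]
  have hassoc : ∀ p l j m, ∑ k, c p l k * c k j m = ∑ k, c l j k * c p k m := by
    intro p l j m
    have e1 : (b p * b l) * b j = ∑ m', (∑ k, c p l k * c k j m') • b m' := by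
      calc (b p * b l) * b j = ∑ k, c p l k • (b k * b j) := by
            rw [hmul p l, Finset.sum_mul]
            exact Finset.sum_congr rfl fun k _ => smul_mul_assoc _ _ _
        _ = ∑ k, ∑ m', (c p l k * c k j m') • b m' := Finset.sum_congr rfl fun k _ => by
            rw [hmul k j, Finset.smul_sum]
            exact Finset.sum_congr rfl fun m' _ => (smul_smul _ _ _)
        _ = ∑ m', (∑ k, c p l k * c k j m') • b m' := by
            rw [Finset.sum_comm]
            exact Finset.sum_congr rfl fun m' _ => (Finset.sum_smul).symm
    have e2 : b p * (b l * b j) = ∑ m', (∑ k, c l j k * c p k m') • b m' := by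
      calc b p * (b l * b j) = ∑ k, c l j k • (b p * b k) := by
            rw [hmul l j, Finset.mul_sum]
            exact Finset.sum_congr rfl fun k _ => mul_smul_comm _ _ _
        _ = ∑ k, ∑ m', (c l j k * c p k m') • b m' := Finset.sum_congr rfl fun k _ => by
            rw [hmul p k, Finset.smul_sum]
            exact Finset.sum_congr rfl fun m' _ => (smul_smul _ _ _)
        _ = ∑ m', (∑ k, c l j k * c p k m') • b m' := by
            rw [Finset.sum_comm]
            exact Finset.sum_congr rfl fun m' _ => (Finset.sum_smul).symm
    have e3 : (∑ m', (∑ k, c p l k * c k j m') • b m')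
        = ∑ m', (∑ k, c l j k * c p k m') • b m' := by
      rw [← e1, ← e2, mul_assoc]
    have h := congrArg (fun x => b.repr x m) e3
    rw [hco, hco] at h
    exact h
  -- the positive matrix
  have hSpos : ∀ k j, 0 < ∑ i, c i j k := by
    intro k j
    obtain ⟨i, hi⟩ := hspm j k
    exact Finset.sum_pos' (fun i' _ => hpos i' j k)
      ⟨i, Finset.mem_univ i, (hpos i j k).lt_of_ne (Ne.symm hi)⟩
  set Sm : Fin n → Fin n → ℝ := fun k j => ∑ i, c i j k with hSmdef
  have hSm : ∀ k j, 0 < Sm k j := hSpos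
  -- every nonnegative character gives a positive normalized eigenvector
  have hchar : ∀ f' : A →ₐ[ℝ] ℝ, (∀ i, 0 ≤ f' (b i)) →
      (f' (b 0) = 1) ∧ (∀ i, 0 < f' (b i)) ∧
      (∀ j, ∑ k, f' (b k) * Sm k j = (∑ i, f' (b i)) * f' (b j)) := by
    intro f' hf'
    have hw0 : f' (b 0) = 1 := by rw [h1, map_one]
    have heig : ∀ j, ∑ k, f' (b k) * Sm k j = (∑ i, f' (b i)) * f' (b j) := by
      intro j
      calc ∑ k, f' (b k) * Sm k j = ∑ k, ∑ i, c i j k * f' (b k) := by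
            refine Finset.sum_congr rfl fun k _ => ?_
            rw [mul_comm, Finset.sum_mul]
        _ = ∑ i, ∑ k, c i j k * f' (b k) := Finset.sum_comm
        _ = ∑ i, f' (b i * b j) := by
            refine Finset.sum_congr rfl fun i _ => ?_
            rw [hmul i j, map_sum]
            exact Finset.sum_congr rfl fun k _ => by
              rw [map_smul, smul_eq_mul]
        _ = ∑ i, f' (b i) * f' (b j) := Finset.sum_congr rfl fun i _ => map_mul _ _ _
        _ = (∑ i, f' (b i)) * f' (b j) := (Finset.sum_mul _ _ _).symm
    obtain ⟨-, hwpos⟩ := spm_eig_pos hSm hf' (by rw [hw0]; norm_num) heig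
    exact ⟨hw0, hwpos, heig⟩
  -- the Perron-Frobenius eigenvector, normalized
  obtain ⟨v0, μ, hv0pos, hμ, hv0eig⟩ := spm_pf_exists Sm hSm
  set v : Fin n → ℝ := fun i => v0 i / v0 0 with hvdef
  have hvpos : ∀ i, 0 < v i := fun i => div_pos (hv0pos i) (hv0pos 0)
  have hv0 : v 0 = 1 := div_self (hv0pos 0).ne'
  have hveig : ∀ j, ∑ k, v k * Sm k j = μ * v j := by
    intro j
    calc ∑ k, v k * Sm k j = (∑ k, v0 k * Sm k j) / v0 0 := by
          rw [Finset.sum_div]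
          exact Finset.sum_congr rfl fun k _ => by
            show v0 k / v0 0 * Sm k j = _; ring
      _ = μ * (v0 j / v0 0) := by rw [hv0eig j]; ring
  -- key multiplicativity of v
  have hkey : ∀ j i, ∑ k, c i j k * v k = v j * v i := by
    intro j
    set w : Fin n → ℝ := fun i => ∑ k, c i j k * v k with hwdef
    have hwnn : ∀ i, 0 ≤ w i := fun i =>
      Finset.sum_nonneg fun k _ => mul_nonneg (hpos i j k) (hvpos k).le
    have hw0 : w 0 = v j := by
      show ∑ k, c 0 j k * v k = v j
      simp [hc0, ite_mul, Finset.sum_ite_eq]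
    have hweig : ∀ l, ∑ i, w i * Sm i l = μ * w l := by
      intro l
      calc ∑ i, w i * Sm i l
          = ∑ i, ∑ m, ∑ p, c p l i * c i j m * v m := by
            refine Finset.sum_congr rfl fun i _ => ?_
            show (∑ m, c i j m * v m) * (∑ p, c p l i) = _
            rw [Finset.sum_mul]
            refine Finset.sum_congr rfl fun m _ => ?_
            rw [Finset.mul_sum]
            exact Finset.sum_congr rfl fun p _ => by ring
        _ = ∑ m, ∑ i, ∑ p, c p l i * c i j m * v m := Finset.sum_comm
        _ = ∑ m, ∑ p, ∑ i, c p l i * c i j m * v m :=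
            Finset.sum_congr rfl fun m _ => Finset.sum_comm
        _ = ∑ m, ∑ p, (∑ i, c p l i * c i j m) * v m := by
            refine Finset.sum_congr rfl fun m _ => Finset.sum_congr rfl fun p _ => ?_
            rw [Finset.sum_mul]
        _ = ∑ m, ∑ p, (∑ k, c l j k * c p k m) * v m := by
            refine Finset.sum_congr rfl fun m _ => Finset.sum_congr rfl fun p _ => ?_
            rw [hassoc p l j m]
        _ = ∑ m, ∑ p, ∑ k, c l j k * (c p k m * v m) := by
            refine Finset.sum_congr rfl fun m _ => Finset.sum_congr rfl fun p _ => ?_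
            rw [Finset.sum_mul]
            exact Finset.sum_congr rfl fun k _ => by ring
        _ = ∑ m, ∑ k, ∑ p, c l j k * (c p k m * v m) :=
            Finset.sum_congr rfl fun m _ => Finset.sum_comm
        _ = ∑ k, ∑ m, ∑ p, c l j k * (c p k m * v m) := Finset.sum_comm
        _ = ∑ k, c l j k * (∑ m, v m * Sm m k) := by
            refine Finset.sum_congr rfl fun k _ => ?_
            rw [Finset.mul_sum]
            refine Finset.sum_congr rfl fun m _ => ?_
            show _ = c l j k * (v m * ∑ p, c p k m)
            calc ∑ p, c l j k * (c p k m * v m)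
                = (∑ p, c p k m) * (c l j k * v m) := by
                  rw [Finset.sum_mul]
                  exact Finset.sum_congr rfl fun p _ => by ring
              _ = c l j k * (v m * ∑ p, c p k m) := by ring
        _ = ∑ k, c l j k * (μ * v k) := by
            refine Finset.sum_congr rfl fun k _ => ?_
            rw [hveig k]
        _ = μ * w l := by
            rw [hwdef, Finset.mul_sum]
            exact Finset.sum_congr rfl fun k _ => by ring
    have hw0pos : 0 < w 0 := by rw [hw0]; exact hvpos j
    obtain ⟨-, hwpos⟩ := spm_eig_pos hSm hwnn hw0pos hweig
    obtain ⟨t, ht, hprop⟩ := spm_eig_unique hSm hvpos hwpos hveig hweig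
    have h0 := hprop 0
    rw [hw0, hv0, mul_one] at h0
    intro i
    show w i = v j * v i
    rw [hprop i, ← h0]
  -- construct the algebra morphism
  set g : A →ₗ[ℝ] ℝ := b.constr ℝ v with hgdef
  have hg : ∀ i, g (b i) = v i := fun i => b.constr_basis ℝ v i
  have hgone : g 1 = 1 := by rw [← h1, hg 0, hv0]
  have hgb : ∀ i j, g (b i * b j) = g (b i) * g (b j) := by
    intro i j
    rw [hmul i j, map_sum, hg, hg]
    calc ∑ k, g (c i j k • b k) = ∑ k, c i j k * v k := by
          refine Finset.sum_congr rfl fun k _ => ?_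
          rw [map_smul, hg, smul_eq_mul]
      _ = v j * v i := hkey j i
      _ = v i * v j := mul_comm _ _
  have hgmul : ∀ x y, g (x * y) = g x * g y := by
    have hby : ∀ i y, g (b i * y) = g (b i) * g y := by
      intro i y
      have hy := Module.Basis.sum_repr b y
      conv_lhs => rw [← hy]
      conv_rhs => rw [← hy]
      rw [Finset.mul_sum, map_sum, map_sum, Finset.mul_sum]
      refine Finset.sum_congr rfl fun j _ => ?_
      rw [mul_smul_comm, map_smul, map_smul, smul_eq_mul, smul_eq_mul, hgb]
      ring
    intro x y
    have hx := Module.Basis.sum_repr b x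
    conv_lhs => rw [← hx]
    conv_rhs => rw [← hx]
    rw [Finset.sum_mul, map_sum, map_sum, Finset.sum_mul]
    refine Finset.sum_congr rfl fun i _ => ?_
    rw [smul_mul_assoc, map_smul, map_smul, smul_eq_mul, smul_eq_mul, hby]
    ring
  set f : A →ₐ[ℝ] ℝ := AlgHom.ofLinearMap g hgone hgmul with hfdef
  have hfb : ∀ i, f (b i) = v i := fun i => hg i
  -- uniqueness workhorse
  have huniq : ∀ f' : A →ₐ[ℝ] ℝ, (∀ i, 0 ≤ f' (b i)) →
      ∀ (v' : Fin n → ℝ) (μ' : ℝ), (∀ i, 0 < v' i) → v' 0 = 1 →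
        (∀ j, ∑ k, v' k * Sm k j = μ' * v' j) → ∀ i, f' (b i) = v' i := by
    intro f' hf' v' μ' hv'pos hv'0 hv'eig
    obtain ⟨hw0, hwpos, heig⟩ := hchar f' hf'
    exact spm_eig_norm_eq hSm hv'pos hwpos hv'0 hw0 hv'eig heig
  constructor
  · refine ⟨f, fun i => (hfb i) ▸ (hvpos i).le, ?_⟩
    intro f' hf'
    have hfb' : ∀ i, f' (b i) = v i := huniq f' hf' v μ hvpos hv0 hveig
    apply AlgHom.toLinearMap_injective
    apply b.ext
    intro i
    show f' (b i) = f (b i)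
    rw [hfb' i, hfb i]
  · intro f' hf'
    refine ⟨(hchar f' hf').1, fun v' μ' hv'pos hv'0 hv'eig i => ?_⟩
    exact huniq f' hf' v' μ' hv'pos hv'0 hv'eig i
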